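/- Let (λ_i)_{i≥0} be a strictly increasing sequence of positive reals converging to a finite limit λ_*, set d_k = λ_{2k} − λ_{2k−1}, and assume ∑_{k=1}^∞ d_k < ∞. For each D > 0 there exists a summable sequence (M_i)_{i≥1} of nonnegative reals, depending only on (λ_i), λ_* and D, such that for every choice of real numbers (P_i)_{i≥1} with λ_{2i−1} ≤ P_i ≤ λ_{2i} for all i, and every μ ∈ ℂ with |μ − λ_*| ≥ D, one has |1 − ((P_i − μ)/(λ_* − μ))·E_i((λ_* − λ_{2i})/(λ_* − μ))| ≤ M_i for every i ≥ 1. In particular the series ∑_{i=1}^∞ |1 − ((P_i − μ)/(λ_* − μ))·E_i((λ_* − λ_{2i})/(λ_* − μ))| converges uniformly on {μ : |μ − λ_*| ≥ D}, uniformly with respect to all admissible choices of (P_i). -/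

import Mathlib

open Filter

/-- The truncated exponential factor `E_n(z) = exp(z + z²/2 + ⋯ + zⁿ/n)`. -/
noncomputable def En (n : ℕ) (z : ℂ) : ℂ :=
  Complex.exp (∑ k ∈ Finset.Icc 1 n, z ^ k / (k : ℂ))

lemma En_abs_le (n : ℕ) (z : ℂ) {C : ℝ} (hz : ‖z‖ ≤ C) :
    ‖(En n z)‖ ≤ Real.exp (∑ k ∈ Finset.Icc 1 n, C ^ k / k) := by
  have h0 : (0:ℝ) ≤ C := le_trans (norm_nonneg z) hz
  rw [En, Complex.norm_exp]
  apply Real.exp_le_exp.mpr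
  calc (∑ k ∈ Finset.Icc 1 n, z ^ k / (k:ℂ)).re
      ≤ ‖(∑ k ∈ Finset.Icc 1 n, z ^ k / (k:ℂ))‖ := Complex.re_le_norm _
    _ ≤ ∑ k ∈ Finset.Icc 1 n, ‖(z ^ k / (k:ℂ))‖ := by
        simpa using norm_sum_le (Finset.Icc 1 n) (fun k => z ^ k / (k:ℂ))
    _ ≤ ∑ k ∈ Finset.Icc 1 n, C ^ k / k := by
        apply Finset.sum_le_sum
        intro k hk
        rw [norm_div, norm_pow, Complex.norm_natCast]
        apply div_le_div_of_nonneg_right ?_ ?_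
        · exact pow_le_pow_left₀ (norm_nonneg z) hz k
        · exact Nat.cast_nonneg k

lemma weier_bound (n : ℕ) (z : ℂ) (hz : ‖z‖ ≤ 1/2) :
    ‖(1 - (1 - z) * En n z)‖ ≤ 4 * ‖z‖ ^ (n + 1) := by
  have hz1 : ‖z‖ < 1 := lt_of_le_of_lt (by simpa using hz) (by norm_num)
  have hne : (1:ℂ) - z ≠ 0 := by
    intro h
    have : ‖z‖ = 1 := by
      have : z = 1 := by linear_combination -h
      simp [this]
    rw [this] at hz; norm_num at hz
  set S : ℂ := ∑ k ∈ Finset.Icc 1 n, z ^ k / (k : ℂ) with hS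
  set r : ℂ := (-Complex.log (1 - z)) - S with hr
  -- tail sum
  have hsum : HasSum (fun k : ℕ => z ^ k / (k:ℂ)) (-Complex.log (1 - z)) :=
    Complex.hasSum_taylorSeries_neg_log hz1
  have hrange : ∑ k ∈ Finset.range (n+1), z ^ k / (k:ℂ) = S := by
    rw [hS, Finset.range_eq_Ico, ← Finset.Ico_add_one_right_eq_Icc]
    rw [Finset.sum_eq_sum_Ico_succ_bot (Nat.succ_pos n)]
    simp
  have htail : HasSum (fun k : ℕ => z ^ (k + (n+1)) / ((k + (n+1) : ℕ):ℂ)) r := by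
    rw [hr, ← hrange]
    exact (hasSum_nat_add_iff' (n+1)).mpr hsum
  have habsz : (0:ℝ) ≤ ‖z‖ := norm_nonneg z
  have hgeo : HasSum (fun k : ℕ => ‖z‖ ^ (n+1) * ‖z‖ ^ k)
      (‖z‖ ^ (n+1) * (1 - ‖z‖)⁻¹) :=
    (hasSum_geometric_of_lt_one habsz (by simpa using hz1)).mul_left _
  have hrle : ‖r‖ ≤ ‖z‖ ^ (n+1) * (1 - ‖z‖)⁻¹ := by
    rw [show ‖r‖ = ‖r‖ from rfl, ← htail.tsum_eq]
    apply tsum_of_norm_bounded hgeo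
    intro k
    rw [norm_div, norm_pow]
    calc ‖z‖ ^ (k + (n+1)) / ‖((k + (n+1):ℕ):ℂ)‖
        ≤ ‖z‖ ^ (k + (n+1)) / 1 := by
          apply div_le_div_of_nonneg_left (by positivity) one_pos
          rw [Complex.norm_natCast]
          exact_mod_cast Nat.one_le_iff_ne_zero.mpr (by omega)
      _ = ‖z‖ ^ (n+1) * ‖z‖ ^ k := by
          rw [div_one, pow_add]; ring
  have hrle2 : ‖r‖ ≤ 2 * ‖z‖ ^ (n+1) := by
    calc ‖r‖ ≤ ‖z‖ ^ (n+1) * (1 - ‖z‖)⁻¹ := hrle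
      _ ≤ ‖z‖ ^ (n+1) * 2 := by
          apply mul_le_mul_of_nonneg_left ?_ (by positivity)
          rw [inv_le_comm₀ (by linarith) (by norm_num)]
          linarith
      _ = 2 * ‖z‖ ^ (n+1) := by ring
  have hr1 : ‖r‖ ≤ 1 := by
    calc ‖r‖ ≤ 2 * ‖z‖ ^ (n+1) := hrle2
      _ ≤ 2 * (1/2:ℝ) ^ (n+1) := by
          apply mul_le_mul_of_nonneg_left (pow_le_pow_left₀ habsz hz _) (by norm_num)
      _ ≤ 1 := by
          rw [pow_succ]
          have : (1/2:ℝ)^n ≤ 1 := pow_le_one₀ (by norm_num) (by norm_num)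
          nlinarith
  -- (1-z) * En n z = exp (-r)
  have hfact : (1 - z) * En n z = Complex.exp (-r) := by
    rw [En, ← hS, ← Complex.exp_log hne, ← Complex.exp_add, hr]
    ring_nf
  rw [hfact]
  calc ‖(1 - Complex.exp (-r))‖ = ‖(Complex.exp (-r) - 1)‖ := by
        rw [← norm_neg]; ring_nf
    _ ≤ 2 * ‖(-r)‖ := Complex.norm_exp_sub_one_le (by simpa using hr1)
    _ ≤ 4 * ‖z‖ ^ (n+1) := by
        rw [norm_neg]; linarith

/-- Uniform summable domination of the Weierstrass–Runge factors: there is a summable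
sequence `(M_i)` of nonnegative reals, depending only on `(λ_i)`, `λ_*` and `D`, such that
`|1 − ((P_i − μ)/(λ_* − μ))·E_i((λ_* − λ_{2i})/(λ_* − μ))| ≤ M_i` for all admissible `(P_i)`,
all `μ` with `|μ − λ_*| ≥ D`, and all `i ≥ 1`. -/
theorem exists_summable_dominating_sequence
    (lam : ℕ → ℝ) (lamStar : ℝ) (hmono : StrictMono lam) (hpos : ∀ i, 0 < lam i)
    (hlim : Tendsto lam atTop (nhds lamStar))
    (hd : Summable (fun k : ℕ => lam (2 * k + 2) - lam (2 * k + 1)))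
    (D : ℝ) (hD : 0 < D) :
    ∃ M : ℕ → ℝ, Summable M ∧ (∀ i, 0 ≤ M i) ∧
      ∀ P : ℕ → ℝ, (∀ i : ℕ, lam (2 * i + 1) ≤ P (i + 1) ∧ P (i + 1) ≤ lam (2 * i + 2)) →
        ∀ μ : ℂ, D ≤ ‖μ - (lamStar : ℂ)‖ →
          ∀ i : ℕ, 1 ≤ i →
            ‖1 -
                (((P i : ℝ) : ℂ) - μ) / ((lamStar : ℂ) - μ) *
                  En i (((lamStar : ℂ) - ((lam (2 * i) : ℝ) : ℂ)) / ((lamStar : ℂ) - μ))‖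
              ≤ M i := by

  have hle : ∀ n, lam n ≤ lamStar := fun n => hmono.monotone.ge_of_tendsto hlim n
  have hlt : ∀ n, lam n < lamStar := fun n => lt_of_lt_of_le (hmono (Nat.lt_succ_self n)) (hle _)
  have hS0 : 0 < lamStar := (hpos 0).trans_le (hle 0)
  have hCnn : (0:ℝ) ≤ lamStar / D := by positivity
  obtain ⟨N₀, hN₀⟩ := Filter.eventually_atTop.mp
    (hlim.eventually (eventually_gt_nhds (show lamStar - D/2 < lamStar by linarith)))
  set N : ℕ := max N₀ 1 with hNdef
  have hN1 : 1 ≤ N := le_max_right _ _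
  have hNbig : lamStar - lam (2*N) ≤ D/2 := by
    have h1 : lamStar - D/2 < lam N₀ := hN₀ N₀ le_rfl
    have h2 : lam N₀ ≤ lam (2*N) := hmono.monotone (le_trans (le_max_left N₀ 1) (by omega))
    linarith
  set B : ℕ → ℝ := fun i =>
    1 + (1 + lamStar / D) * Real.exp (∑ k ∈ Finset.Icc 1 i, (lamStar / D) ^ k / k) with hB
  set M : ℕ → ℝ := fun i =>
    if i < N then B i else 4 * (1/2:ℝ) ^ (i+1) + (8 / D) * (lam (2*i) - lam (2*i-1)) with hM
  have hgap : Summable (fun i : ℕ => lam (2*i) - lam (2*i-1)) := by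
    apply (summable_nat_add_iff 1).mp
    apply hd.congr
    intro n
    congr 1 <;> congr 1 <;> omega
  have hMnn : ∀ i, 0 ≤ M i := by
    intro i
    rw [hM]
    dsimp only
    split_ifs with h
    · have h1 : (0:ℝ) ≤ (1 + lamStar/D) * Real.exp (∑ k ∈ Finset.Icc 1 i, (lamStar / D) ^ k / k) :=
        mul_nonneg (by linarith) (Real.exp_pos _).le
      rw [hB]; dsimp only; linarith
    · have h2 : lam (2*i-1) ≤ lam (2*i) := hmono.monotone (by omega)
      have h3 : (0:ℝ) ≤ 4 * (1/2:ℝ) ^ (i+1) := by positivity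
      have h4 : (0:ℝ) ≤ (8/D) * (lam (2*i) - lam (2*i-1)) :=
        mul_nonneg (by positivity) (by linarith)
      linarith
  have hMsum : Summable M := by
    apply (summable_nat_add_iff N).mp
    have hs : Summable (fun i : ℕ => 4 * (1/2:ℝ) ^ (i+1) + (8 / D) * (lam (2*i) - lam (2*i-1))) := by
      apply Summable.add
      · exact (((summable_nat_add_iff 1).mpr
          (summable_geometric_of_lt_one (by norm_num) (by norm_num))).mul_left 4)
      · exact hgap.mul_left _
    apply ((summable_nat_add_iff N).mpr hs).congr
    intro n
    rw [hM]
    dsimp only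
    rw [if_neg (by omega)]
  refine ⟨M, hMsum, hMnn, ?_⟩
  intro P hP μ hμ i hi
  obtain ⟨j, rfl⟩ : ∃ j, i = j + 1 := ⟨i - 1, by omega⟩
  have ht : D ≤ ‖((lamStar:ℂ) - μ)‖ := by rwa [norm_sub_rev]
  have ht0 : (0:ℝ) < ‖((lamStar:ℂ) - μ)‖ := lt_of_lt_of_le hD ht
  have hne : (lamStar:ℂ) - μ ≠ 0 := by
    intro h; rw [h] at ht0; simp at ht0
  set t : ℝ := ‖((lamStar:ℂ) - μ)‖ with htdef
  have habs : ∀ x : ℝ, x ≤ lamStar → ‖((lamStar:ℂ) - (x:ℂ))‖ = lamStar - x := by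
    intro x hx
    rw [show ((lamStar:ℂ) - (x:ℂ)) = ((lamStar - x : ℝ):ℂ) by push_cast; ring,
      Complex.norm_real, Real.norm_eq_abs, abs_of_nonneg (by linarith)]
  have hPl : lam (2*j+1) ≤ P (j+1) := (hP j).1
  have hPu : P (j+1) ≤ lam (2*j+2) := (hP j).2
  have h2j : 2*(j+1) = 2*j+2 := by ring
  have hPle : P (j+1) ≤ lamStar := hPu.trans (hle _)
  have hPpos : 0 < P (j+1) := (hpos _).trans_le hPl
  set zc : ℂ := ((lamStar:ℂ) - ((lam (2*(j+1)) : ℝ):ℂ)) / ((lamStar:ℂ) - μ) with hzc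
  set ac : ℂ := ((lamStar:ℂ) - ((P (j+1) : ℝ):ℂ)) / ((lamStar:ℂ) - μ) with hac
  have hw : (((P (j+1) : ℝ):ℂ) - μ) / ((lamStar:ℂ) - μ) = 1 - ac := by
    rw [hac]; field_simp; ring
  have habs_z : ‖zc‖ = (lamStar - lam (2*(j+1))) / t := by
    rw [hzc, norm_div, habs _ (hle _), htdef]
  have habs_a : ‖ac‖ = (lamStar - P (j+1)) / t := by
    rw [hac, norm_div, habs _ hPle, htdef]
  rw [hw]
  rw [hM]
  dsimp only
  by_cases hiN : j + 1 < N
  · rw [if_pos hiN]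
    have habsz_le : ‖zc‖ ≤ lamStar / D := by
      rw [habs_z]
      have h1 : lamStar - lam (2*(j+1)) ≤ lamStar := by
        have := hpos (2*(j+1)); linarith
      calc (lamStar - lam (2*(j+1))) / t ≤ lamStar / t := by
            apply div_le_div_of_nonneg_right h1 ht0.le |>.trans_eq rfl
        _ ≤ lamStar / D := by gcongr
    have hE : ‖(En (j+1) zc)‖ ≤
        Real.exp (∑ k ∈ Finset.Icc 1 (j+1), (lamStar / D) ^ k / k) :=
      En_abs_le _ _ habsz_le
    have habsw : ‖(1 - ac)‖ ≤ 1 + lamStar / D := by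
      calc ‖(1 - ac)‖ ≤ ‖(1:ℂ)‖ + ‖ac‖ := by
            simpa using norm_sub_le (1:ℂ) ac
        _ ≤ 1 + lamStar / D := by
            rw [norm_one, habs_a]
            have h1 : lamStar - P (j+1) ≤ lamStar := by linarith
            have : (lamStar - P (j+1)) / t ≤ lamStar / D := by
              calc (lamStar - P (j+1)) / t ≤ lamStar / t :=
                    div_le_div_of_nonneg_right h1 ht0.le |>.trans_eq rfl
                _ ≤ lamStar / D := by gcongr
            linarith
    calc ‖(1 - (1 - ac) * En (j+1) zc)‖
        ≤ ‖(1:ℂ)‖ + ‖((1 - ac) * En (j+1) zc)‖ :=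
          (norm_sub_le _ _).trans_eq (by rw [norm_mul]) |>.trans_eq rfl
      _ = 1 + ‖(1 - ac)‖ * ‖(En (j+1) zc)‖ := by
          rw [norm_one, norm_mul]
      _ ≤ 1 + (1 + lamStar / D) *
            Real.exp (∑ k ∈ Finset.Icc 1 (j+1), (lamStar / D) ^ k / k) := by
          have := mul_le_mul habsw hE (norm_nonneg _) (by linarith)
          linarith
      _ = B (j+1) := by rw [hB]
  · rw [if_neg hiN]
    have hNle : 2*N ≤ 2*(j+1) := by omega
    have hz12 : ‖zc‖ ≤ 1/2 := by
      rw [habs_z]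
      have h1 : lamStar - lam (2*(j+1)) ≤ D/2 := by
        have := hmono.monotone hNle; linarith
      have h2 : 0 ≤ lamStar - lam (2*(j+1)) := by have := hle (2*(j+1)); linarith
      calc (lamStar - lam (2*(j+1))) / t ≤ (D/2) / D :=
            div_le_div₀ (by linarith) h1 hD ht
        _ = 1/2 := by field_simp
    have hzma : zc - ac = (((P (j+1) : ℝ):ℂ) - ((lam (2*(j+1)) : ℝ):ℂ)) / ((lamStar:ℂ) - μ) := by
      rw [hzc, hac, div_sub_div_same]
      congr 1
      ring
    clear_value zc ac
    have hsplit : 1 - (1 - ac) * En (j+1) zc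
        = (1 - (1 - zc) * En (j+1) zc) + (ac - zc) * En (j+1) zc := by ring
    have habs_za : ‖(zc - ac)‖ ≤ (lam (2*j+2) - lam (2*j+1)) / D := by
      rw [hzma, norm_div,
        show (((P (j+1) : ℝ):ℂ) - ((lam (2*(j+1)) : ℝ):ℂ)) = ((P (j+1) - lam (2*(j+1)) : ℝ):ℂ)
          by push_cast; ring,
        Complex.norm_real, Real.norm_eq_abs, ← htdef]
      have h1 : |P (j+1) - lam (2*(j+1))| = lam (2*(j+1)) - P (j+1) := by
        rw [abs_sub_comm, abs_of_nonneg]; rw [h2j]; linarith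
      rw [h1, h2j]
      calc (lam (2*j+2) - P (j+1)) / t ≤ (lam (2*j+2) - lam (2*j+1)) / t := by
            apply div_le_div_of_nonneg_right (by linarith) ht0.le |>.trans_eq rfl
        _ ≤ (lam (2*j+2) - lam (2*j+1)) / D := by
            gcongr
            have := hmono (show 2*j+1 < 2*j+2 by omega); linarith
    have hE8 : ‖(En (j+1) zc)‖ ≤ 8 := by
      have h1 := En_abs_le (j+1) zc hz12
      have h2 : ∑ k ∈ Finset.Icc 1 (j+1), (1/2:ℝ) ^ k / k ≤ 2 := by
        calc ∑ k ∈ Finset.Icc 1 (j+1), (1/2:ℝ) ^ k / k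
            ≤ ∑ k ∈ Finset.Icc 1 (j+1), (1/2:ℝ) ^ k := by
              apply Finset.sum_le_sum
              intro k hk
              have hk1 : (1:ℝ) ≤ k := by exact_mod_cast (Finset.mem_Icc.mp hk).1
              calc (1/2:ℝ)^k / k ≤ (1/2:ℝ)^k / 1 := by
                    apply div_le_div_of_nonneg_left (by positivity) one_pos hk1
                _ = (1/2:ℝ)^k := div_one _
          _ ≤ ∑ k ∈ Finset.range (j+2), (1/2:ℝ) ^ k := by
              apply Finset.sum_le_sum_of_subset_of_nonneg
              · intro k hk
                rw [Finset.mem_range]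
                exact Nat.lt_succ_of_le (Finset.mem_Icc.mp hk).2
              · intro k _ _; positivity
          _ ≤ ∑' k : ℕ, (1/2:ℝ) ^ k := by
              apply Summable.sum_le_tsum _ (fun k _ => by positivity)
                (summable_geometric_of_lt_one (by norm_num) (by norm_num))
          _ = 2 := tsum_geometric_two
      have h3 : Real.exp (∑ k ∈ Finset.Icc 1 (j+1), (1/2:ℝ) ^ k / k) ≤ Real.exp 2 :=
        Real.exp_le_exp.mpr h2
      have h4 : Real.exp 2 ≤ 8 := by
        have he := Real.exp_one_lt_d9
        have h5 : Real.exp 2 = Real.exp 1 * Real.exp 1 := by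
          rw [← Real.exp_add]; norm_num
        nlinarith [Real.exp_pos 1]
      linarith
    calc ‖(1 - (1 - ac) * En (j+1) zc)‖
        ≤ ‖(1 - (1 - zc) * En (j+1) zc)‖
            + ‖((ac - zc) * En (j+1) zc)‖ := by
          rw [hsplit]
          exact norm_add_le _ _
      _ ≤ 4 * ‖zc‖ ^ (j+1+1)
            + ((lam (2*j+2) - lam (2*j+1)) / D) * 8 := by
          have hb1 := weier_bound (j+1) zc hz12
          have hb2 : ‖((ac - zc) * En (j+1) zc)‖
              ≤ ((lam (2*j+2) - lam (2*j+1)) / D) * 8 := by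
            rw [norm_mul, norm_sub_rev]
            apply mul_le_mul habs_za hE8 (norm_nonneg _)
            have := hmono (show 2*j+1 < 2*j+2 by omega)
            exact div_nonneg (by linarith) hD.le
          linarith
      _ ≤ 4 * (1/2:ℝ) ^ (j+1+1) + (8 / D) * (lam (2*(j+1)) - lam (2*(j+1)-1)) := by
          have h1 : ‖zc‖ ^ (j+1+1) ≤ (1/2:ℝ) ^ (j+1+1) :=
            pow_le_pow_left₀ (norm_nonneg _) hz12 _
          have h2 : 2*(j+1) = 2*j+2 := by ring
          have h3 : 2*(j+1) - 1 = 2*j+1 := by omega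
          rw [h3, h2]
          have : ((lam (2*j+2) - lam (2*j+1)) / D) * 8 = (8/D) * (lam (2*j+2) - lam (2*j+1)) := by
            ring
          linarith
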